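/- Consider a one-hidden-layer network u(x) = Σ_{i=1}^{D₁} V_i^{(1)} φ(b_i^{(0)} + Σ_j V_{ij}^{(0)} x_j) with input x ∈ ℝ^{D₀}. If the V_{ij}^{(0)} are i.i.d. symmetric heavy-tailed, the b_i^{(0)} are i.i.d. symmetric, the V_i^{(1)} are i.i.d. symmetric continuous random variables, all mutually independent, and φ is differentiable with |φ'| bounded away from zero, then each partial derivative ∂_{x_k} u(x) = Σ_i V_i^{(1)} V_{ik}^{(0)} φ'(b_i^{(0)} + Σ_j V_{ij}^{(0)} x_j) is heavy-tailed for every fixed x. -/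

import Mathlib

open MeasureTheory ProbabilityTheory Real
open scoped ENNReal NNReal

/-- A real random variable `X` on `(Ω, μ)` is heavy-tailed if `E[e^{t|X|}] = ∞` for all `t > 0`. -/
def HeavyTailed {Ω : Type*} [MeasurableSpace Ω] (μ : Measure Ω) (X : Ω → ℝ) : Prop :=
  ∀ t : ℝ, 0 < t → ∫⁻ ω, ENNReal.ofReal (Real.exp (t * |X ω|)) ∂μ = ⊤

/-- A distribution `ν` on `ℝ` is heavy-tailed if `∫ e^{t|x|} dν(x) = ∞` for all `t > 0`. -/
def HeavyTailedDist (ν : Measure ℝ) : Prop :=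
  ∀ t : ℝ, 0 < t → ∫⁻ x, ENNReal.ofReal (Real.exp (t * |x|)) ∂ν = ⊤

private lemma lintegral_exp_pos {Ω : Type*} [MeasurableSpace Ω] (μ : Measure Ω)
    [IsProbabilityMeasure μ] (f : Ω → ℝ) (hf : Measurable f) :
    0 < ∫⁻ ω, ENNReal.ofReal (Real.exp (f ω)) ∂μ := by
  rw [lintegral_pos_iff_support (by fun_prop)]
  have hs : Function.support (fun ω => ENNReal.ofReal (Real.exp (f ω))) = Set.univ := by
    ext ω
    simp [Function.mem_support, ENNReal.ofReal_eq_zero, not_le, Real.exp_pos]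
  rw [hs]
  simp

private lemma exists_eps (ν : Measure ℝ) [IsProbabilityMeasure ν]
    (f : ℝ → ℝ≥0∞) (hdens : ν = volume.withDensity f) :
    ∃ ε : ℝ, 0 < ε ∧ ν {w : ℝ | ε ≤ |w|} ≠ 0 := by
  by_contra h
  push_neg at h
  have h0 : ν ({(0:ℝ)}ᶜ) = 0 := by
    have hsub : ({(0:ℝ)}ᶜ : Set ℝ) ⊆ ⋃ n : ℕ, {w : ℝ | 1/(n+1) ≤ |w|} := by
      intro w hw
      have hw' : (0:ℝ) < |w| := abs_pos.mpr (by simpa using hw)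
      obtain ⟨n, hn⟩ := exists_nat_one_div_lt hw'
      exact Set.mem_iUnion.mpr ⟨n, le_of_lt hn⟩
    refine measure_mono_null hsub ?_
    rw [measure_iUnion_null_iff]
    intro n
    exact h (1/(n+1)) (by positivity)
  have h1 : ν {(0:ℝ)} = 0 := by
    rw [hdens, withDensity_apply _ (measurableSet_singleton 0)]
    simp
  have h2 : ν Set.univ ≤ ν {(0:ℝ)} + ν ({(0:ℝ)}ᶜ) := by
    rw [← Set.union_compl_self {(0:ℝ)}]
    exact measure_union_le _ _
  rw [h0, h1, measure_univ] at h2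
  simp at h2

private lemma core_prod (t ε : ℝ) (ht : 0 < t) (hε : 0 < ε)
    (νW νZ : Measure ℝ) [IsProbabilityMeasure νW] [IsProbabilityMeasure νZ]
    (hsymm : Measure.map (fun x : ℝ => -x) νW = νW)
    (hWε : νW {w : ℝ | ε ≤ |w|} ≠ 0)
    (hZ : ∫⁻ z, ENNReal.ofReal (Real.exp (t * ε * |z|)) ∂νZ = ⊤) :
    ∫⁻ p : ℝ × ℝ, ENNReal.ofReal (Real.exp (t * (p.1 * p.2))) ∂(νZ.prod νW) = ⊤ := by
  rw [lintegral_prod _ (by fun_prop : Measurable fun p : ℝ × ℝ =>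
    ENNReal.ofReal (Real.exp (t * (p.1 * p.2)))).aemeasurable]
  set m : ℝ≥0∞ := νW {w : ℝ | ε ≤ |w|} with hm
  have claim : ∀ z : ℝ, m * ENNReal.ofReal (Real.exp (t * ε * |z|)) ≤
      2 * ∫⁻ w, ENNReal.ofReal (Real.exp (t * (z * w))) ∂νW := by
    intro z
    set I := ∫⁻ w, ENNReal.ofReal (Real.exp (t * (z * w))) ∂νW with hI
    have hsym : I = ∫⁻ w, ENNReal.ofReal (Real.exp (-(t * (z * w)))) ∂νW := by
      conv_lhs => rw [hI, ← hsymm, lintegral_map (by fun_prop) measurable_neg]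
      simp [mul_neg]
    have h2I : ∫⁻ w, ENNReal.ofReal (Real.exp (t * |z| * |w|)) ∂νW ≤ I + I := by
      nth_rewrite 2 [hsym]
      rw [hI, ← lintegral_add_left (by fun_prop)]
      refine lintegral_mono fun w => ?_
      rw [← ENNReal.ofReal_add (Real.exp_pos _).le (Real.exp_pos _).le]
      apply ENNReal.ofReal_le_ofReal
      have habs : t * |z| * |w| = |t * (z * w)| := by
        rw [abs_mul, abs_mul, abs_of_pos ht, mul_assoc]
      rw [habs]
      rcases abs_choice (t * (z * w)) with h | h <;> rw [h]
      · exact le_add_of_nonneg_right (Real.exp_pos _).le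
      · exact le_add_of_nonneg_left (Real.exp_pos _).le
    have hind : m * ENNReal.ofReal (Real.exp (t * ε * |z|)) ≤
        ∫⁻ w, ENNReal.ofReal (Real.exp (t * |z| * |w|)) ∂νW := by
      have hmeasS : MeasurableSet {w : ℝ | ε ≤ |w|} :=
        (isClosed_le continuous_const continuous_abs).measurableSet
      calc m * ENNReal.ofReal (Real.exp (t * ε * |z|))
          = ∫⁻ _ in {w : ℝ | ε ≤ |w|}, ENNReal.ofReal (Real.exp (t * ε * |z|)) ∂νW := by
            rw [setLIntegral_const]; ring
        _ ≤ ∫⁻ w in {w : ℝ | ε ≤ |w|}, ENNReal.ofReal (Real.exp (t * |z| * |w|)) ∂νW := by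
            refine setLIntegral_mono (by fun_prop) fun w hw => ?_
            apply ENNReal.ofReal_le_ofReal
            apply Real.exp_le_exp.mpr
            have hw' : ε ≤ |w| := hw
            nlinarith [abs_nonneg z, mul_nonneg ht.le (abs_nonneg z)]
        _ ≤ ∫⁻ w, ENNReal.ofReal (Real.exp (t * |z| * |w|)) ∂νW :=
            setLIntegral_le_lintegral _ _
    calc m * ENNReal.ofReal (Real.exp (t * ε * |z|)) ≤ I + I := le_trans hind h2I
      _ = 2 * I := (two_mul I).symm
  have htot : (⊤ : ℝ≥0∞) ≤ 2 * ∫⁻ z, ∫⁻ w, ENNReal.ofReal (Real.exp (t * (z * w))) ∂νW ∂νZ := by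
    calc (⊤ : ℝ≥0∞) = m * ⊤ := (ENNReal.mul_top hWε).symm
      _ = m * ∫⁻ z, ENNReal.ofReal (Real.exp (t * ε * |z|)) ∂νZ := by rw [hZ]
      _ = ∫⁻ z, m * ENNReal.ofReal (Real.exp (t * ε * |z|)) ∂νZ := by
          rw [lintegral_const_mul _ (by fun_prop)]
      _ ≤ ∫⁻ z, 2 * ∫⁻ w, ENNReal.ofReal (Real.exp (t * (z * w))) ∂νW ∂νZ :=
          lintegral_mono claim
      _ = 2 * ∫⁻ z, ∫⁻ w, ENNReal.ofReal (Real.exp (t * (z * w))) ∂νW ∂νZ := by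
          rw [lintegral_const_mul]
          exact Measurable.lintegral_prod_right'
            (by fun_prop : Measurable fun p : ℝ × ℝ =>
              ENNReal.ofReal (Real.exp (t * (p.1 * p.2))))
  by_contra hne
  exact absurd (top_le_iff.mp htot) (ENNReal.mul_ne_top (by norm_num) hne)

/-- For a one-hidden-layer network `u(x) = ∑ i, V¹_i φ(b⁰_i + ∑ j, V⁰_{ij} x_j)` with i.i.d.
symmetric heavy-tailed input weights `V⁰_{ij}`, i.i.d. symmetric biases `b⁰_i`, i.i.d. symmetric
continuous output weights `V¹_i`, all mutually independent, and `φ` differentiable with `|φ'|`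
bounded away from zero, each partial derivative
`∂_{x_k} u(x) = ∑ i, V¹_i V⁰_{ik} φ'(b⁰_i + ∑ j, V⁰_{ij} x_j)` is heavy-tailed. -/
theorem one_layer_partial_derivative_heavyTailed
    {Ω : Type*} [MeasurableSpace Ω] (μ : Measure Ω) [IsProbabilityMeasure μ]
    (D₀ D₁ : ℕ) (hD₀ : 0 < D₀) (hD₁ : 0 < D₁)
    (V0 : Fin D₁ → Fin D₀ → Ω → ℝ) (V1 b : Fin D₁ → Ω → ℝ)
    (hV0 : ∀ i j, Measurable (V0 i j)) (hV1 : ∀ i, Measurable (V1 i))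
    (hb : ∀ i, Measurable (b i))
    -- mutual independence of all weights and biases
    (hindep : iIndepFun
      (fun s : (Fin D₁ × Fin D₀) ⊕ (Fin D₁ ⊕ Fin D₁) =>
        Sum.elim (fun p => V0 p.1 p.2) (Sum.elim b V1) s) μ)
    -- the V⁰_{ij} are i.i.d. symmetric heavy-tailed
    (νV : Measure ℝ) (hνVid : ∀ i j, Measure.map (V0 i j) μ = νV)
    (hνVsymm : Measure.map (fun x : ℝ => -x) νV = νV)
    (hνVheavy : HeavyTailedDist νV)
    -- the b⁰_i are i.i.d. symmetric
    (νb : Measure ℝ) (hνbid : ∀ i, Measure.map (b i) μ = νb)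
    (hνbsymm : Measure.map (fun x : ℝ => -x) νb = νb)
    -- the V¹_i are i.i.d. symmetric continuous (with a density)
    (νW : Measure ℝ) (hνWid : ∀ i, Measure.map (V1 i) μ = νW)
    (hνWsymm : Measure.map (fun x : ℝ => -x) νW = νW)
    (fW : ℝ → ℝ≥0∞) (hfW : Measurable fW) (hνWdens : νW = volume.withDensity fW)
    -- the activation function
    (φ : ℝ → ℝ) (hφ : Differentiable ℝ φ)
    (c : ℝ) (hc : 0 < c) (hφ' : ∀ z : ℝ, c ≤ |deriv φ z|)
    -- fixed input
    (x : Fin D₀ → ℝ) (k : Fin D₀) :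
    HeavyTailed μ (fun ω =>
      ∑ i, V1 i ω * V0 i k ω * deriv φ (b i ω + ∑ j, V0 i j ω * x j)) := by
    classical
  intro t ht
  set ι := (Fin D₁ × Fin D₀) ⊕ (Fin D₁ ⊕ Fin D₁) with hι
  set F : ι → Ω → ℝ :=
    fun s => Sum.elim (fun p => V0 p.1 p.2) (Sum.elim b V1) s with hF
  have hFmeas : ∀ s, Measurable (F s) := by
    rintro (⟨i, j⟩ | i | i)
    · exact hV0 i j
    · exact hb i
    · exact hV1 i
  set i₀ : Fin D₁ := ⟨0, hD₁⟩ with hi₀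
  have hd : Measurable (deriv φ) := measurable_deriv φ
  set Z : Ω → ℝ := fun ω => V0 i₀ k ω * deriv φ (b i₀ ω + ∑ j, V0 i₀ j ω * x j) with hZdef
  have hZmeas : Measurable Z :=
    (hV0 i₀ k).mul (hd.comp ((hb i₀).add
      (Finset.measurable_sum _ fun j _ => (hV0 i₀ j).mul_const _)))
  set T : Fin D₁ → Ω → ℝ :=
    fun i ω => V1 i ω * V0 i k ω * deriv φ (b i ω + ∑ j, V0 i j ω * x j) with hT
  have hTmeas : ∀ i, Measurable (T i) := fun i =>
    ((hV1 i).mul (hV0 i k)).mul (hd.comp ((hb i).add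
      (Finset.measurable_sum _ fun j _ => (hV0 i j).mul_const _)))
  set S' : Ω → ℝ := fun ω => ∑ i ∈ Finset.univ.erase i₀, T i ω with hS'
  have hS'meas : Measurable S' := Finset.measurable_sum _ fun i _ => hTmeas i
  -- index sets
  set SW : Finset ι := {Sum.inr (Sum.inr i₀)} with hSW
  set SZ : Finset ι :=
    (Finset.univ.image fun j : Fin D₀ => (Sum.inl (i₀, j) : ι)) ∪ {Sum.inr (Sum.inl i₀)}
    with hSZ
  set SA : Finset ι := SZ ∪ SW with hSA
  set idx : ι → Fin D₁ := Sum.elim Prod.fst (Sum.elim id id) with hidx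
  set SB : Finset ι := Finset.univ.filter fun s : ι => idx s ≠ i₀ with hSB
  have hmVj : ∀ j : Fin D₀, (Sum.inl (i₀, j) : ι) ∈ SZ := fun j => by simp [hSZ]
  have hmb : (Sum.inr (Sum.inl i₀) : ι) ∈ SZ := by simp [hSZ]
  have hmW : (Sum.inr (Sum.inr i₀) : ι) ∈ SW := by simp [hSW]
  have hmBV : ∀ i : Fin D₁, i ≠ i₀ → ∀ j : Fin D₀, (Sum.inl (i, j) : ι) ∈ SB := by
    intro i hi j; simp [hSB, hidx, hi]
  have hmBb : ∀ i : Fin D₁, i ≠ i₀ → (Sum.inr (Sum.inl i) : ι) ∈ SB := by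
    intro i hi; simp [hSB, hidx, hi]
  have hmBW : ∀ i : Fin D₁, i ≠ i₀ → (Sum.inr (Sum.inr i) : ι) ∈ SB := by
    intro i hi; simp [hSB, hidx, hi]
  have hdisjZW : Disjoint SZ SW := by
    rw [Finset.disjoint_left]
    intro s hs hs'
    rw [hSW, Finset.mem_singleton] at hs'
    subst hs'
    rw [hSZ, Finset.mem_union, Finset.mem_image, Finset.mem_singleton] at hs
    rcases hs with ⟨j, -, hj⟩ | hj
    · simp at hj
    · cases hj
  have hidxA : ∀ s ∈ SA, idx s = i₀ := by
    intro s hs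
    rw [hSA, hSZ, hSW, Finset.mem_union, Finset.mem_union, Finset.mem_image,
      Finset.mem_singleton, Finset.mem_singleton] at hs
    rcases hs with (⟨j, -, rfl⟩ | rfl) | rfl <;> rfl
  have hdisjAB : Disjoint SA SB := by
    rw [Finset.disjoint_left]
    intro s hs hs'
    rw [hSB, Finset.mem_filter] at hs'
    exact hs'.2 (hidxA s hs)
  -- projection functions
  set ζW : (↥SW → ℝ) → ℝ := fun g => g ⟨Sum.inr (Sum.inr i₀), hmW⟩ with hζW
  set ζZ : (↥SZ → ℝ) → ℝ := fun g =>
    g ⟨Sum.inl (i₀, k), hmVj k⟩ *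
      deriv φ (g ⟨Sum.inr (Sum.inl i₀), hmb⟩ + ∑ j, g ⟨Sum.inl (i₀, j), hmVj j⟩ * x j)
    with hζZ
  have hζWmeas : Measurable ζW := measurable_pi_apply _
  have hζZmeas : Measurable ζZ :=
    (measurable_pi_apply _).mul (hd.comp ((measurable_pi_apply _).add
      (Finset.measurable_sum _ fun j _ => (measurable_pi_apply _).mul_const _)))
  have hindZW : IndepFun Z (V1 i₀) μ := by
    have h := (hindep.indepFun_finset SZ SW hdisjZW hFmeas).comp hζZmeas hζWmeas
    exact h
  set ζA : (↥SA → ℝ) → ℝ := fun g =>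
    g ⟨Sum.inr (Sum.inr i₀), Finset.mem_union_right _ hmW⟩ *
      g ⟨Sum.inl (i₀, k), Finset.mem_union_left _ (hmVj k)⟩ *
      deriv φ (g ⟨Sum.inr (Sum.inl i₀), Finset.mem_union_left _ hmb⟩ +
        ∑ j, g ⟨Sum.inl (i₀, j), Finset.mem_union_left _ (hmVj j)⟩ * x j)
    with hζA
  set ζB : (↥SB → ℝ) → ℝ := fun g =>
    ∑ i ∈ (Finset.univ.erase i₀).attach,
      g ⟨Sum.inr (Sum.inr i.1), hmBW i.1 (Finset.ne_of_mem_erase i.2)⟩ *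
        g ⟨Sum.inl (i.1, k), hmBV i.1 (Finset.ne_of_mem_erase i.2) k⟩ *
        deriv φ (g ⟨Sum.inr (Sum.inl i.1), hmBb i.1 (Finset.ne_of_mem_erase i.2)⟩ +
          ∑ j, g ⟨Sum.inl (i.1, j), hmBV i.1 (Finset.ne_of_mem_erase i.2) j⟩ * x j)
    with hζB
  have hζAmeas : Measurable ζA := by
    rw [hζA]
    exact ((measurable_pi_apply (⟨Sum.inr (Sum.inr i₀),
        Finset.mem_union_right _ hmW⟩ : ↥SA)).mul
      (measurable_pi_apply (⟨Sum.inl (i₀, k),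
        Finset.mem_union_left _ (hmVj k)⟩ : ↥SA))).mul
      (hd.comp ((measurable_pi_apply (⟨Sum.inr (Sum.inl i₀),
          Finset.mem_union_left _ hmb⟩ : ↥SA)).add
        (Finset.measurable_sum Finset.univ fun j _ =>
          (measurable_pi_apply _).mul_const _)))
  have hζBmeas : Measurable ζB := by
    rw [hζB]
    refine Finset.measurable_sum _ fun i _ => ?_
    exact ((measurable_pi_apply (⟨Sum.inr (Sum.inr i.1),
        hmBW i.1 (Finset.ne_of_mem_erase i.2)⟩ : ↥SB)).mul
      (measurable_pi_apply (⟨Sum.inl (i.1, k),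
        hmBV i.1 (Finset.ne_of_mem_erase i.2) k⟩ : ↥SB))).mul
      (hd.comp ((measurable_pi_apply (⟨Sum.inr (Sum.inl i.1),
          hmBb i.1 (Finset.ne_of_mem_erase i.2)⟩ : ↥SB)).add
        (Finset.measurable_sum Finset.univ fun j _ =>
          (measurable_pi_apply _).mul_const _)))
  have hindAB : IndepFun (T i₀) S' μ := by
    have h := (hindep.indepFun_finset SA SB hdisjAB hFmeas).comp hζAmeas hζBmeas
    have e1 : T i₀ = ζA ∘ (fun a (i : ↥SA) => F i a) := rfl
    have e2 : S' = ζB ∘ (fun a (i : ↥SB) => F i a) := by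
      funext ω
      exact (Finset.sum_attach _ fun i => T i ω).symm
    rw [e1, e2]
    exact h
  -- distributions
  haveI hPZ : IsProbabilityMeasure (μ.map Z) := Measure.isProbabilityMeasure_map hZmeas.aemeasurable
  haveI hPW : IsProbabilityMeasure νW := by
    rw [← hνWid i₀]; exact Measure.isProbabilityMeasure_map (hV1 i₀).aemeasurable
  obtain ⟨ε, hε, hWε⟩ := exists_eps νW fW hνWdens
  have hheavyZ : ∫⁻ z, ENNReal.ofReal (Real.exp (t * ε * |z|)) ∂(μ.map Z) = ⊤ := by
    rw [lintegral_map (by fun_prop) hZmeas]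
    refine top_le_iff.mp ?_
    have h0 := hνVheavy (t * ε * c) (by positivity)
    rw [← hνVid i₀ k, lintegral_map (by fun_prop) (hV0 i₀ k)] at h0
    rw [← h0]
    refine lintegral_mono fun ω => ?_
    apply ENNReal.ofReal_le_ofReal
    apply Real.exp_le_exp.mpr
    have h1 : |Z ω| = |V0 i₀ k ω| * |deriv φ (b i₀ ω + ∑ j, V0 i₀ j ω * x j)| := abs_mul _ _
    have h2 := hφ' (b i₀ ω + ∑ j, V0 i₀ j ω * x j)
    rw [h1]
    nlinarith [mul_nonneg (mul_nonneg (mul_pos ht hε).le (abs_nonneg (V0 i₀ k ω)))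
      (sub_nonneg.mpr h2)]
  have hpairZW : μ.map (fun ω => (Z ω, V1 i₀ ω)) = (μ.map Z).prod (μ.map (V1 i₀)) :=
    (indepFun_iff_map_prod_eq_prod_map_map hZmeas.aemeasurable (hV1 i₀).aemeasurable).mp hindZW
  have hT0top : ∫⁻ ω, ENNReal.ofReal (Real.exp (t * T i₀ ω)) ∂μ = ⊤ := by
    have he : ∀ ω, t * T i₀ ω = t * (Z ω * V1 i₀ ω) := fun ω => by
      simp only [hT, hZdef]; ring
    calc ∫⁻ ω, ENNReal.ofReal (Real.exp (t * T i₀ ω)) ∂μ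
        = ∫⁻ ω, ENNReal.ofReal (Real.exp (t * (Z ω * V1 i₀ ω))) ∂μ := by
          simp_rw [he]
      _ = ∫⁻ p : ℝ × ℝ, ENNReal.ofReal (Real.exp (t * (p.1 * p.2)))
            ∂(μ.map fun ω => (Z ω, V1 i₀ ω)) :=
          (lintegral_map (by fun_prop : Measurable fun p : ℝ × ℝ =>
              ENNReal.ofReal (Real.exp (t * (p.1 * p.2))))
            (hZmeas.prodMk (hV1 i₀))).symm
      _ = ⊤ := by
          rw [hpairZW, hνWid i₀]
          exact core_prod t ε ht hε νW (μ.map Z) hνWsymm hWε hheavyZ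
  have hSpos : ∫⁻ ω, ENNReal.ofReal (Real.exp (t * S' ω)) ∂μ ≠ 0 :=
    (lintegral_exp_pos μ _ (measurable_const.mul hS'meas)).ne'
  have hpairTS : μ.map (fun ω => (T i₀ ω, S' ω)) = (μ.map (T i₀)).prod (μ.map S') :=
    (indepFun_iff_map_prod_eq_prod_map_map (hTmeas i₀).aemeasurable
      hS'meas.aemeasurable).mp hindAB
  have hsum : ∫⁻ ω, ENNReal.ofReal (Real.exp (t * (T i₀ ω + S' ω))) ∂μ = ⊤ := by
    have he : ∀ ω, ENNReal.ofReal (Real.exp (t * (T i₀ ω + S' ω))) =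
        ENNReal.ofReal (Real.exp (t * T i₀ ω)) * ENNReal.ofReal (Real.exp (t * S' ω)) := by
      intro ω
      rw [← ENNReal.ofReal_mul (Real.exp_pos _).le, ← Real.exp_add]
      ring_nf
    calc ∫⁻ ω, ENNReal.ofReal (Real.exp (t * (T i₀ ω + S' ω))) ∂μ
        = ∫⁻ ω, ENNReal.ofReal (Real.exp (t * T i₀ ω)) *
            ENNReal.ofReal (Real.exp (t * S' ω)) ∂μ := by simp_rw [he]
      _ = ∫⁻ p : ℝ × ℝ, ENNReal.ofReal (Real.exp (t * p.1)) *
            ENNReal.ofReal (Real.exp (t * p.2)) ∂(μ.map fun ω => (T i₀ ω, S' ω)) :=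
          (lintegral_map (by fun_prop : Measurable fun p : ℝ × ℝ =>
              ENNReal.ofReal (Real.exp (t * p.1)) * ENNReal.ofReal (Real.exp (t * p.2)))
            ((hTmeas i₀).prodMk hS'meas)).symm
      _ = (∫⁻ a, ENNReal.ofReal (Real.exp (t * a)) ∂(μ.map (T i₀))) *
            ∫⁻ a, ENNReal.ofReal (Real.exp (t * a)) ∂(μ.map S') := by
          rw [hpairTS]
          exact lintegral_prod_mul
            (by fun_prop : Measurable fun a : ℝ =>
              ENNReal.ofReal (Real.exp (t * a))).aemeasurable
            (by fun_prop : Measurable fun a : ℝ =>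
              ENNReal.ofReal (Real.exp (t * a))).aemeasurable
      _ = ⊤ := by
          rw [lintegral_map (by fun_prop) (hTmeas i₀), lintegral_map (by fun_prop) hS'meas,
            hT0top]
          exact ENNReal.top_mul hSpos
  refine top_le_iff.mp ?_
  have hsplit : ∀ ω, T i₀ ω + S' ω = ∑ i, T i ω := by
    intro ω
    simp only [hS']
    exact Finset.add_sum_erase _ (fun i => T i ω) (Finset.mem_univ i₀)
  calc (⊤ : ℝ≥0∞) = ∫⁻ ω, ENNReal.ofReal (Real.exp (t * (T i₀ ω + S' ω))) ∂μ := hsum.symm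
    _ ≤ ∫⁻ ω, ENNReal.ofReal (Real.exp (t * |∑ i, T i ω|)) ∂μ := by
        refine lintegral_mono fun ω => ?_
        apply ENNReal.ofReal_le_ofReal
        apply Real.exp_le_exp.mpr
        rw [hsplit ω]
        exact mul_le_mul_of_nonneg_left (le_abs_self _) ht.le
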